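/- For every t ∈ (0,1), the following change-of-variables identity holds: ∫_{(1/2)√(−ln t)}^{√(−ln t)} √(e^{−2x²} − t²) dx = (1/2) ∫_0^{arcosh(t^{−3/4})} [t · sinh(w) · tanh(w)] / √(−(1/2)·ln(t² cosh²(w))) dw, where both integrals are finite. (The substitution is e^{−2x²} = t² cosh²(w).) -/

import Mathlib

open MeasureTheory intervalIntegral

/-- The inverse hyperbolic cosine, `arcosh x = log (x + √(x² − 1))`. -/
noncomputable def arcosh (x : ℝ) : ℝ := Real.log (x + Real.sqrt (x ^ 2 - 1))

lemma cosh_arcosh {y : ℝ} (hy : 1 ≤ y) : Real.cosh (arcosh y) = y := by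
  have h0 : (0:ℝ) ≤ y ^ 2 - 1 := by nlinarith
  have hsq : Real.sqrt (y ^ 2 - 1) * Real.sqrt (y ^ 2 - 1) = y ^ 2 - 1 := Real.mul_self_sqrt h0
  have hs : 0 ≤ Real.sqrt (y ^ 2 - 1) := Real.sqrt_nonneg _
  have hu : 0 < y + Real.sqrt (y ^ 2 - 1) := by linarith
  have hinv : (y + Real.sqrt (y ^ 2 - 1))⁻¹ = y - Real.sqrt (y ^ 2 - 1) := by
    apply inv_eq_of_mul_eq_one_right
    nlinarith [hsq]
  rw [arcosh, Real.cosh_eq, Real.exp_log hu, ← Real.log_inv, Real.exp_log (by positivity), hinv]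
  ring

theorem wkb_change_of_variables (t : ℝ) (ht : t ∈ Set.Ioo (0 : ℝ) 1) :
    IntervalIntegrable (fun x : ℝ => Real.sqrt (Real.exp (-2 * x ^ 2) - t ^ 2))
      volume ((1 / 2) * Real.sqrt (-Real.log t)) (Real.sqrt (-Real.log t)) ∧
    IntervalIntegrable (fun w : ℝ =>
        t * Real.sinh w * Real.tanh w / Real.sqrt (-(1 / 2) * Real.log (t ^ 2 * Real.cosh w ^ 2)))
      volume 0 (arcosh (t ^ (-(3 : ℝ) / 4))) ∧
    (∫ x in ((1 / 2) * Real.sqrt (-Real.log t))..(Real.sqrt (-Real.log t)),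
        Real.sqrt (Real.exp (-2 * x ^ 2) - t ^ 2))
      = (1 / 2) * ∫ w in (0 : ℝ)..(arcosh (t ^ (-(3 : ℝ) / 4))),
          t * Real.sinh w * Real.tanh w / Real.sqrt (-(1 / 2) * Real.log (t ^ 2 * Real.cosh w ^ 2)) := by
  obtain ⟨ht0, ht1⟩ := ht
  set L : ℝ := -Real.log t with hLdef
  have hL : 0 < L := by
    have := Real.log_neg ht0 ht1; simp only [hLdef]; linarith
  set y : ℝ := t ^ (-(3 : ℝ) / 4) with hydef
  have hy1 : 1 ≤ y :=
    Real.one_le_rpow_of_pos_of_le_one_of_nonpos ht0 ht1.le (by norm_num)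
  set W : ℝ := arcosh y with hWdef
  have hcoshW : Real.cosh W = y := cosh_arcosh hy1
  have hlogy : Real.log y = (3 / 4) * L := by
    rw [hydef, Real.log_rpow ht0]; simp [hLdef]; ring
  have hW0 : 0 ≤ W := by
    have h1 : (1:ℝ) ≤ y + Real.sqrt (y ^ 2 - 1) := le_add_of_le_of_nonneg hy1 (Real.sqrt_nonneg _)
    simpa [hWdef, arcosh] using Real.log_nonneg h1
  -- the auxiliary functions
  set u : ℝ → ℝ := fun w => L - Real.log (Real.cosh w) with hudef
  set g : ℝ → ℝ := fun w => Real.sqrt (u w) with hgdef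
  set f : ℝ → ℝ := fun x => Real.sqrt (Real.exp (-2 * x ^ 2) - t ^ 2) with hfdef
  have hcosh_pos : ∀ w : ℝ, 0 < Real.cosh w := fun w => Real.cosh_pos (x := w)
  have hupos : ∀ w ∈ Set.uIcc (0:ℝ) W, (1/4) * L ≤ u w := by
    intro w hw
    rw [Set.uIcc_of_le hW0] at hw
    have h1 : Real.cosh w ≤ Real.cosh W := by
      rw [Real.cosh_le_cosh, abs_of_nonneg hw.1, abs_of_nonneg hW0]; exact hw.2
    have h2 : Real.log (Real.cosh w) ≤ Real.log y := by
      rw [← hcoshW]; exact Real.log_le_log (hcosh_pos w) h1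
    rw [hlogy] at h2
    simp only [hudef]; linarith
  have hgpos : ∀ w ∈ Set.uIcc (0:ℝ) W, 0 < g w := by
    intro w hw
    exact Real.sqrt_pos.mpr (lt_of_lt_of_le (by linarith) (hupos w hw))
  -- argument of the sqrt in RHS equals u w
  have harg : ∀ w : ℝ, -(1 / 2) * Real.log (t ^ 2 * Real.cosh w ^ 2) = u w := by
    intro w
    rw [Real.log_mul (by positivity) (by positivity), Real.log_pow, Real.log_pow]
    simp only [hudef, hLdef]
    push_cast; ring
  -- continuity of u and g
  have hu_cont : Continuous u :=
    continuous_const.sub (Real.continuous_cosh.log (fun w => (hcosh_pos w).ne'))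
  have hg_cont : Continuous g := Real.continuous_sqrt.comp hu_cont
  have hf_cont : Continuous f := by
    apply Real.continuous_sqrt.comp
    exact ((Real.continuous_exp.comp (by continuity)).sub continuous_const)
  have htanh_cont : Continuous Real.tanh := by
    have hE : Real.tanh = fun x => Real.sinh x / Real.cosh x :=
      funext fun x => Real.tanh_eq_sinh_div_cosh x
    rw [hE]
    exact Real.continuous_sinh.div Real.continuous_cosh (fun x => (hcosh_pos x).ne')
  -- derivative of g
  have hderiv : ∀ w ∈ Set.uIcc (0:ℝ) W, HasDerivAt g (-Real.tanh w / (2 * g w)) w := by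
    intro w hw
    have hune : u w ≠ 0 :=
      (lt_of_lt_of_le (by linarith : (0:ℝ) < 1 / 4 * L) (hupos w hw)).ne'
    have hc : HasDerivAt Real.cosh (Real.sinh w) w := Real.hasDerivAt_cosh w
    have hl : HasDerivAt (fun w => Real.log (Real.cosh w))
        (Real.sinh w / Real.cosh w) w := hc.log (hcosh_pos w).ne'
    have hu' : HasDerivAt u (-Real.tanh w) w := by
      have := hl.const_sub L
      simpa [hudef, Real.tanh_eq_sinh_div_cosh] using this
    have := (Real.hasDerivAt_sqrt hune).comp w hu'
    convert this using 1
    · rfl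
    · rfl
    · rfl
    simp only [hgdef]
    field_simp
  have hderiv_cont : ContinuousOn (fun w => -Real.tanh w / (2 * g w)) (Set.uIcc (0:ℝ) W) := by
    apply ContinuousOn.div
    · exact htanh_cont.neg.continuousOn
    · exact (continuous_const.mul hg_cont).continuousOn
    · intro w hw; have := hgpos w hw; positivity
  -- change of variables
  have key : (∫ w in (0:ℝ)..W, (-Real.tanh w / (2 * g w)) • (f ∘ g) w)
      = ∫ x in (g 0)..(g W), f x :=
    intervalIntegral.integral_comp_smul_deriv hderiv hderiv_cont hf_cont
  -- endpoints
  have hg0 : g 0 = Real.sqrt L := by simp [hgdef, hudef]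
  have hgW : g W = (1 / 2) * Real.sqrt L := by
    have : u W = (1/2)^2 * L := by
      simp only [hudef]
      rw [hcoshW, hlogy]; ring
    rw [hgdef]
    simp only [this]
    rw [Real.sqrt_mul (by norm_num) L, Real.sqrt_sq (by norm_num)]
  -- pointwise identification of the integrand
  have hpt : ∀ w ∈ Set.uIcc (0:ℝ) W,
      (-Real.tanh w / (2 * g w)) • (f ∘ g) w
        = (-(1/2)) * (t * Real.sinh w * Real.tanh w /
            Real.sqrt (-(1 / 2) * Real.log (t ^ 2 * Real.cosh w ^ 2))) := by
    intro w hw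
    have hw0 : 0 ≤ w := by rw [Set.uIcc_of_le hW0] at hw; exact hw.1
    have hunn : 0 ≤ u w := le_trans (by positivity) (hupos w hw)
    have hfg : (f ∘ g) w = t * Real.sinh w := by
      have hexp : Real.exp (-2 * (g w) ^ 2) = t ^ 2 * Real.cosh w ^ 2 := by
        rw [hgdef]
        simp only [Real.sq_sqrt hunn]
        rw [hudef]
        have : -2 * (L - Real.log (Real.cosh w))
            = 2 * Real.log t + 2 * Real.log (Real.cosh w) := by simp [hLdef]; ring
        rw [this, Real.exp_add]
        rw [show (2:ℝ) * Real.log t = Real.log t + Real.log t by ring, Real.exp_add,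
          Real.exp_log ht0,
          show (2:ℝ) * Real.log (Real.cosh w) = Real.log (Real.cosh w) + Real.log (Real.cosh w)
            by ring, Real.exp_add, Real.exp_log (hcosh_pos w)]
        ring
      have hsinh : 0 ≤ Real.sinh w := Real.sinh_nonneg_iff.mpr hw0
      simp only [Function.comp_apply, hfdef, hexp]
      have : t ^ 2 * Real.cosh w ^ 2 - t ^ 2 = (t * Real.sinh w) ^ 2 := by
        have := Real.cosh_sq w; nlinarith [this]
      rw [this, Real.sqrt_sq (by positivity)]
    rw [hfg, harg w]
    have hgne : g w ≠ 0 := (hgpos w hw).ne'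
    rw [smul_eq_mul]
    rw [show Real.sqrt (u w) = g w from rfl]
    field_simp
  have hcongr : (∫ w in (0:ℝ)..W, (-Real.tanh w / (2 * g w)) • (f ∘ g) w)
      = ∫ w in (0:ℝ)..W, (-(1/2)) * (t * Real.sinh w * Real.tanh w /
          Real.sqrt (-(1 / 2) * Real.log (t ^ 2 * Real.cosh w ^ 2))) :=
    intervalIntegral.integral_congr hpt
  -- integrability claims
  have hint1 : IntervalIntegrable f volume ((1 / 2) * Real.sqrt L) (Real.sqrt L) :=
    hf_cont.intervalIntegrable _ _
  have hH : ∀ w : ℝ, t * Real.sinh w * Real.tanh w /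
      Real.sqrt (-(1 / 2) * Real.log (t ^ 2 * Real.cosh w ^ 2))
      = t * Real.sinh w * Real.tanh w / g w := by
    intro w; rw [harg w]
  have hint2 : IntervalIntegrable (fun w : ℝ =>
      t * Real.sinh w * Real.tanh w /
        Real.sqrt (-(1 / 2) * Real.log (t ^ 2 * Real.cosh w ^ 2))) volume 0 W := by
    apply ContinuousOn.intervalIntegrable
    have : ContinuousOn (fun w : ℝ => t * Real.sinh w * Real.tanh w / g w) (Set.uIcc 0 W) := by
      apply ContinuousOn.div
      · exact ((continuous_const.mul Real.continuous_sinh).mul htanh_cont).continuousOn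
      · exact hg_cont.continuousOn
      · intro w hw; exact (hgpos w hw).ne'
    exact this.congr (fun w _ => hH w)
  refine ⟨hint1, hint2, ?_⟩
  rw [hg0, hgW] at key
  rw [hcongr, intervalIntegral.integral_const_mul] at key
  rw [show (∫ x in Real.sqrt L..(1 / 2) * Real.sqrt L, f x)
      = -∫ x in (1 / 2) * Real.sqrt L..Real.sqrt L, f x from
      intervalIntegral.integral_symm _ _] at key
  simp only [hfdef] at key ⊢
  linarith [key]
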